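/- Let T be the rooted d-ary tree (d ≥ 2) and let C, D be two disjoint branches (components of T minus an edge, not containing the root). Then the expected number of edges of the Group-Walk random graph R_n joining a vertex of C ∩ ∂T_n to a vertex of D ∩ ∂T_n converges to a finite positive limit as n → ∞. -/

import Mathlib

/-- The sphere of radius `n` in the rooted `d`-ary tree, whose vertices are words over
`Fin d` (the root is the empty word, children are obtained by appending a letter). -/
def ternSphere (d : ℕ) : ℕ → Finset (List (Fin d))
  | 0 => {[]}
  | n + 1 => (ternSphere d n).biUnion
      (fun l => Finset.univ.image (fun i : Fin d => l ++ [i]))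

namespace Stmt5

open Finset Filter Topology


variable {d : ℕ}

lemma length_of_mem : ∀ {n : ℕ} {l : List (Fin d)}, l ∈ ternSphere d n → l.length = n
  | 0, l, h => by
    simp only [ternSphere, Finset.mem_singleton] at h
    simp [h]
  | n+1, l, h => by
    simp only [ternSphere, Finset.mem_biUnion, Finset.mem_image, Finset.mem_univ,
      true_and] at h
    obtain ⟨l', hl', i, rfl⟩ := h
    simp [length_of_mem hl']

lemma mem_of_length : ∀ {n : ℕ} {l : List (Fin d)}, l.length = n → l ∈ ternSphere d n
  | 0, l, h => by
    simp only [ternSphere, Finset.mem_singleton]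
    exact List.length_eq_zero_iff.mp h
  | n+1, l, h => by
    have hne : l ≠ [] := by
      intro hl; rw [hl] at h; simp at h
    have hdl : l.dropLast ∈ ternSphere d n :=
      mem_of_length (by simp [List.length_dropLast, h])
    simp only [ternSphere, Finset.mem_biUnion, Finset.mem_image, Finset.mem_univ, true_and]
    exact ⟨l.dropLast, hdl, l.getLast hne, List.dropLast_append_getLast hne⟩

lemma sum_step (n : ℕ) (G : List (Fin d) → ℝ) :
    ∑ l ∈ ternSphere d (n+1), G l = ∑ l ∈ ternSphere d n, ∑ i : Fin d, G (l ++ [i]) := by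
  have hdisj : ((ternSphere d n : Finset (List (Fin d))) : Set (List (Fin d))).PairwiseDisjoint
      (fun l => Finset.univ.image (fun i : Fin d => l ++ [i])) := by
    intro a ha b hb hab
    simp only [Function.onFun]
    rw [Finset.disjoint_left]
    intro x hxa hxb
    simp only [Finset.mem_image, Finset.mem_univ, true_and] at hxa hxb
    obtain ⟨i, rfl⟩ := hxa
    obtain ⟨j, hj⟩ := hxb
    exact hab ((List.append_inj hj (by
      rw [length_of_mem (Finset.mem_coe.mp hb), length_of_mem (Finset.mem_coe.mp ha)])).1).symm
  show ∑ l ∈ (ternSphere d n).biUnion _, G l = _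
  rw [Finset.sum_biUnion hdisj]
  refine Finset.sum_congr rfl fun l _ => ?_
  rw [Finset.sum_image]
  intro i _ j _ hij
  simpa using hij

lemma sum_one (n : ℕ) : ∑ _l ∈ ternSphere d n, (1:ℝ) = (d:ℝ)^n := by
  induction n with
  | zero => simp [ternSphere]
  | succ n ih =>
    rw [sum_step n (fun _ => (1:ℝ))]
    simp only [Finset.sum_const, Finset.card_univ, Fintype.card_fin, nsmul_eq_mul, mul_one]
    have hcard : ((ternSphere d n).card : ℝ) = (d:ℝ)^n := by
      simpa using ih
    rw [hcard, pow_succ]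

lemma sum_prefix (p : List (Fin d)) :
    ∀ (M : ℕ) (G : List (Fin d) → ℝ),
      ∑ l ∈ ternSphere d (p.length + M), (if p <+: l then G l else 0)
        = ∑ s ∈ ternSphere d M, G (p ++ s)
  | 0, G => by
    rw [Nat.add_zero]
    have hcongr : ∀ l ∈ ternSphere d p.length,
        (if p <+: l then G l else 0) = (if l = p then G l else 0) := by
      intro l hl
      by_cases h : p <+: l
      · rw [if_pos h, if_pos (h.eq_of_length (by rw [length_of_mem hl])).symm]
      · rw [if_neg h, if_neg (by rintro rfl; exact h (List.prefix_refl l))]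
    rw [Finset.sum_congr rfl hcongr, Finset.sum_ite_eq' (ternSphere d p.length) p G,
      if_pos (mem_of_length rfl)]
    simp [ternSphere]
  | M+1, G => by
    have h1 : p.length + (M+1) = (p.length + M) + 1 := by omega
    rw [h1, sum_step (p.length + M) (fun l => if p <+: l then G l else 0)]
    have hcongr : ∀ l ∈ ternSphere d (p.length + M),
        (∑ i : Fin d, if p <+: l ++ [i] then G (l ++ [i]) else 0)
          = (if p <+: l then ∑ i : Fin d, G (l ++ [i]) else 0) := by
      intro l hl
      have hlen : p.length ≤ l.length := by rw [length_of_mem hl]; omega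
      have hiff : ∀ i : Fin d, (p <+: l ++ [i]) ↔ (p <+: l) := by
        intro i
        constructor
        · intro hpre
          have htake : (l ++ [i]).take p.length = l.take p.length := by
            rw [List.take_append, Nat.sub_eq_zero_of_le hlen,
              List.take_zero, List.append_nil]
          have heq : p = l.take p.length :=
            (List.prefix_iff_eq_take.mp hpre).trans htake
          rw [heq]
          exact List.take_prefix _ _
        · intro h
          exact h.trans (List.prefix_append l [i])
      rw [Finset.sum_congr rfl (fun i _ => by rw [if_congr (hiff i) rfl rfl])]
      split_ifs <;> simp
    rw [Finset.sum_congr rfl hcongr,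
      sum_prefix p M (fun l => ∑ i : Fin d, G (l ++ [i])),
      sum_step M (fun s => G (p ++ s))]
    refine Finset.sum_congr rfl fun s _ => Finset.sum_congr rfl fun i _ => ?_
    rw [List.append_assoc]

lemma count_prefix (p : List (Fin d)) (M : ℕ) (h : p.length ≤ M) :
    ∑ s ∈ ternSphere d M, (if p <+: s then (1:ℝ) else 0) = (d:ℝ)^(M - p.length) := by
  obtain ⟨M', rfl⟩ : ∃ M', M = p.length + M' := ⟨M - p.length, by omega⟩
  rw [sum_prefix p M' (fun _ => (1:ℝ)), sum_one]
  congr 1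
  omega

/-- Sum of `F` over the relative sphere of radius `j` below `w`. -/
noncomputable def Tm (F : List (Fin d) → ℝ) (w : List (Fin d)) (j : ℕ) : ℝ :=
  ∑ s ∈ ternSphere d j, F (w ++ s)

lemma Tm_zero (F : List (Fin d) → ℝ) (w : List (Fin d)) : Tm F w 0 = F w := by
  simp [Tm, ternSphere]

lemma Tm_one (F : List (Fin d) → ℝ) (w : List (Fin d)) :
    Tm F w 1 = ∑ i : Fin d, F (w ++ [i]) := by
  rw [Tm, show (1:ℕ) = 0 + 1 from rfl, sum_step 0 (fun s => F (w ++ s))]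
  simp [ternSphere]

section Harmonic

variable {n : ℕ} {F : List (Fin d) → ℝ}
variable (hFh : ∀ l : List (Fin d), l.length < n →
    F l * (if l = [] then (d : ℝ) else d + 1)
      = (if l = [] then 0 else F l.dropLast) + ∑ i : Fin d, F (l ++ [i]))

include hFh

lemma T_rec (w : List (Fin d)) (j : ℕ) (h : w.length + (j+1) < n) :
    ((d:ℝ)+1) * Tm F w (j+1) = d * Tm F w j + Tm F w (j+2) := by
  have key : ∀ s ∈ ternSphere d (j+1),
      ((d:ℝ)+1) * F (w ++ s) = F (w ++ s.dropLast) + ∑ i : Fin d, F (w ++ (s ++ [i])) := by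
    intro s hs
    have hlen := length_of_mem hs
    have hsne : s ≠ [] := by
      intro h0; rw [h0] at hlen; simp at hlen
    have hws : w ++ s ≠ [] := by simp [hsne]
    have := hFh (w ++ s) (by rw [List.length_append, hlen]; omega)
    rw [if_neg hws, if_neg hws, List.dropLast_append_of_ne_nil (l' := w) hsne] at this
    rw [mul_comm]
    rw [this]
    congr 1
    refine Finset.sum_congr rfl fun i _ => ?_
    rw [List.append_assoc]
  have h1 : ((d:ℝ)+1) * Tm F w (j+1)
      = (∑ s ∈ ternSphere d (j+1), F (w ++ s.dropLast))
        + ∑ s ∈ ternSphere d (j+1), ∑ i : Fin d, F (w ++ (s ++ [i])) := by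
    rw [Tm, Finset.mul_sum, ← Finset.sum_add_distrib]
    exact Finset.sum_congr rfl key
  have h2 : (∑ s ∈ ternSphere d (j+1), F (w ++ s.dropLast)) = d * Tm F w j := by
    rw [sum_step j (fun s => F (w ++ s.dropLast))]
    have : ∀ s ∈ ternSphere d j,
        (∑ i : Fin d, F (w ++ (s ++ [i]).dropLast)) = (d:ℝ) * F (w ++ s) := by
      intro s _
      simp [List.dropLast_concat, Finset.sum_const, mul_comm]
    rw [Finset.sum_congr rfl this, Tm, Finset.mul_sum]
  have h3 : (∑ s ∈ ternSphere d (j+1), ∑ i : Fin d, F (w ++ (s ++ [i]))) = Tm F w (j+2) := by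
    rw [Tm, show j+2 = (j+1)+1 from rfl, sum_step (j+1) (fun s => F (w ++ s))]
  rw [h1, h2, h3]

lemma T_diff (w : List (Fin d)) (j : ℕ) (h : w.length + j + 1 ≤ n) :
    Tm F w (j+1) - Tm F w j = (d:ℝ)^j * (Tm F w 1 - Tm F w 0) := by
  induction j with
  | zero => simp
  | succ j ih =>
    have hrec := T_rec hFh w j (by omega)
    have ih' := ih (by omega)
    linear_combination (-1 : ℝ) * hrec + (d:ℝ) * ih'

lemma T_geom (w : List (Fin d)) (j : ℕ) (h : w.length + j ≤ n) :
    ((d:ℝ)-1) * (Tm F w j - Tm F w 0) = ((d:ℝ)^j - 1) * (Tm F w 1 - Tm F w 0) := by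
  induction j with
  | zero => simp
  | succ j ih =>
    have hdiff := T_diff hFh w j (by omega)
    have ih' := ih (by omega)
    linear_combination ih' + ((d:ℝ)-1) * hdiff

omit hFh in
lemma T_boundary {w' : List (Fin d)}
    (hFb : ∀ l ∈ ternSphere d n, F l = if w' <+: l then 1 else 0)
    (w : List (Fin d)) (h : w.length ≤ n) :
    Tm F w (n - w.length)
      = ∑ s ∈ ternSphere d (n - w.length), (if w' <+: w ++ s then (1:ℝ) else 0) := by
  refine Finset.sum_congr rfl fun s hs => hFb _ (mem_of_length ?_)
  rw [List.length_append, length_of_mem hs]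
  omega

omit hFh

lemma N_zero (w w' : List (Fin d)) (hinc : ¬ w <+: w' ∧ ¬ w' <+: w) (M : ℕ) :
    ∑ s ∈ ternSphere d M, (if w' <+: w ++ s then (1:ℝ) else 0) = 0 :=
  Finset.sum_eq_zero fun s _ => if_neg (fun h =>
    (List.prefix_or_prefix_of_prefix (List.prefix_append w s) h).elim hinc.1 hinc.2)

lemma N_pref (w w' : List (Fin d)) (h : w <+: w') (M : ℕ)
    (hM : w'.length ≤ w.length + M) :
    ∑ s ∈ ternSphere d M, (if w' <+: w ++ s then (1:ℝ) else 0)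
      = (d:ℝ)^(w.length + M - w'.length) := by
  obtain ⟨r, rfl⟩ := h
  have hr : ∀ s, ((w ++ r <+: w ++ s) ↔ (r <+: s)) := fun s => List.prefix_append_right_inj w
  rw [Finset.sum_congr rfl (fun s _ => if_congr (hr s) rfl rfl)]
  rw [count_prefix r M (by rw [List.length_append] at hM; omega)]
  congr 1
  rw [List.length_append]
  omega

include hFh

lemma val_root (hd : 2 ≤ d) {w' : List (Fin d)}
    (hFb : ∀ l ∈ ternSphere d n, F l = if w' <+: l then 1 else 0)
    (hn : 0 < n) (hw' : w'.length ≤ n) :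
    F [] * (d:ℝ)^n = (d:ℝ)^(n - w'.length) := by
  have hg := T_geom hFh [] n (by simp)
  have hb : Tm F [] n = (d:ℝ)^(n - w'.length) := by
    have := T_boundary hFb [] (by simp)
    simp only [List.length_nil, Nat.sub_zero, List.nil_append] at this
    rw [this, count_prefix w' n hw']
  have h1 : Tm F [] 1 = (d:ℝ) * F [] := by
    have := hFh [] (by simpa using hn)
    rw [if_pos rfl, if_pos rfl] at this
    rw [Tm_one]
    simp only [List.nil_append] at this ⊢
    linarith [this]
  have hdne : (d:ℝ) - 1 ≠ 0 := by
    have : (2:ℝ) ≤ (d:ℝ) := by exact_mod_cast hd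
    intro h0; nlinarith
  rw [hb, Tm_zero, h1] at hg
  have := mul_left_cancel₀ hdne (show ((d:ℝ)-1) * ((d:ℝ)^(n - w'.length) - F [])
      = ((d:ℝ)-1) * (((d:ℝ)^n - 1) * F []) from by linear_combination hg)
  linear_combination -this

lemma val_step (hd : 2 ≤ d) {w' : List (Fin d)}
    (hFb : ∀ l ∈ ternSphere d n, F l = if w' <+: l then 1 else 0)
    (w : List (Fin d)) (hw : w ≠ []) (hwn : w.length < n) :
    F w.dropLast * ((d:ℝ)^(n - w.length) - 1)
      = F w * ((d:ℝ)^(n - w.length) * d - 1)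
        - ((d:ℝ)-1) * (∑ s ∈ ternSphere d (n - w.length), (if w' <+: w ++ s then (1:ℝ) else 0)) := by
  have hg := T_geom hFh w (n - w.length) (by omega)
  have hb := T_boundary hFb w (by omega)
  have harm := hFh w hwn
  rw [if_neg hw, if_neg hw, ← Tm_one F w] at harm
  rw [hb, Tm_zero] at hg
  linear_combination hg - ((d:ℝ)^(n - w.length) - 1) * harm

lemma piece (hd : 2 ≤ d) {w' : List (Fin d)}
    (hFb : ∀ l ∈ ternSphere d n, F l = if w' <+: l then 1 else 0)
    (v : List (Fin d)) (hinc : ¬ v <+: w' ∧ ¬ w' <+: v) (hn : v.length + 1 ≤ n) :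
    ∑ l ∈ ternSphere d n, (if v <+: l then F l.dropLast else 0)
      = F v * (((d:ℝ)-1) * (d:ℝ)^(n - v.length) / ((d:ℝ)^(n - v.length) - 1)) := by
  obtain ⟨M, rfl⟩ : ∃ M, n = v.length + (M+1) := ⟨n - v.length - 1, by omega⟩
  have hexp : v.length + (M+1) - v.length = M+1 := by omega
  rw [hexp]
  have hLHS : ∑ l ∈ ternSphere d (v.length + (M+1)), (if v <+: l then F l.dropLast else 0)
      = (d:ℝ) * Tm F v M := by
    rw [sum_prefix v (M+1) (fun l => F l.dropLast)]
    refine (sum_step M (fun s => F (v ++ s).dropLast)).trans ?_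
    have hc : ∀ s ∈ ternSphere d M,
        (∑ i : Fin d, F (v ++ (s ++ [i])).dropLast) = (d:ℝ) * F (v ++ s) := by
      intro s _
      have hdl : ∀ i : Fin d, (v ++ (s ++ [i])).dropLast = v ++ s := by
        intro i; rw [← List.append_assoc, List.dropLast_concat]
      simp [hdl, Finset.sum_const, mul_comm]
    rw [Finset.sum_congr rfl hc, Tm, Finset.mul_sum]
  have hgM := T_geom hFh v M (by omega)
  have hgM1 := T_geom hFh v (M+1) (by omega)
  have hb : Tm F v (M+1) = 0 := by
    have h1 := T_boundary hFb v (by omega)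
    rw [hexp] at h1
    rw [h1, N_zero v w' hinc (M+1)]
  rw [Tm_zero] at hgM hgM1
  rw [hb] at hgM1
  have hd2 : (2:ℝ) ≤ (d:ℝ) := by exact_mod_cast hd
  have hdne : (d:ℝ) - 1 ≠ 0 := by intro h0; nlinarith
  have hlt : (1:ℝ) < (d:ℝ)^(M+1) := one_lt_pow₀ (by linarith) (by omega)
  have hmne : (d:ℝ)^(M+1) - 1 ≠ 0 := sub_ne_zero.mpr (ne_of_gt hlt)
  have hC : Tm F v M * ((d:ℝ)^(M+1) - 1) = F v * ((d:ℝ)^M * ((d:ℝ)-1)) := by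
    apply mul_left_cancel₀ hdne
    linear_combination ((d:ℝ)^(M+1) - 1) * hgM - ((d:ℝ)^M - 1) * hgM1
  rw [hLHS]
  field_simp
  linear_combination (d:ℝ) * hC

end Harmonic

lemma chain (hd : 2 ≤ d) (w' v : List (Fin d)) (hv : ¬ w' <+: v)
    (F : ℕ → List (Fin d) → ℝ)
    (hFb : ∀ n, ∀ l ∈ ternSphere d n, F n l = if w' <+: l then 1 else 0)
    (hFh : ∀ n, ∀ l : List (Fin d), l.length < n →
      F n l * (if l = [] then (d : ℝ) else d + 1)
        = (if l = [] then 0 else F n l.dropLast) + ∑ i : Fin d, F n (l ++ [i])) :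
    ∀ t, t ≤ v.length → ∃ c : ℝ, 0 < c ∧
      Filter.Tendsto (fun n => F n (v.take t)) atTop (𝓝 c) := by
  have hd2 : (2:ℝ) ≤ (d:ℝ) := by exact_mod_cast hd
  have hdpos : (0:ℝ) < d := by linarith
  intro t
  induction t with
  | zero =>
    intro _
    refine ⟨((d:ℝ)^w'.length)⁻¹, by positivity, ?_⟩
    have hev : (fun _ : ℕ => ((d:ℝ)^w'.length)⁻¹) =ᶠ[atTop] (fun n => F n (v.take 0)) := by
      filter_upwards [eventually_ge_atTop (w'.length + 1)] with n hn
      have hroot := val_root (hFh n) hd (hFb n) (by omega) (by omega)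
      have hne : ((d:ℝ)^n) ≠ 0 := by positivity
      have hsplit : (d:ℝ)^(n - w'.length) * (d:ℝ)^(w'.length) = (d:ℝ)^n :=
        pow_sub_mul_pow (d:ℝ) (by omega)
      have h2 : F n [] * ((d:ℝ)^n * (d:ℝ)^w'.length) = (d:ℝ)^n := by
        rw [← mul_assoc, hroot]; exact hsplit
      have h4 := mul_left_cancel₀ hne
        (show (d:ℝ)^n * (F n [] * (d:ℝ)^w'.length) = (d:ℝ)^n * 1 from by
          linear_combination h2)
      rw [List.take_zero]
      exact inv_eq_of_mul_eq_one_right (by rw [mul_comm]; exact h4)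
    exact tendsto_const_nhds.congr' hev
  | succ t ih =>
    intro ht
    obtain ⟨c, hc, hTc⟩ := ih (by omega)
    set q := v.take (t+1) with hq
    have hqlen : q.length = t+1 := by rw [hq, List.length_take]; omega
    have hqne : q ≠ [] := by
      intro h0; rw [h0] at hqlen; simp at hqlen
    have hqdrop : q.dropLast = v.take t := by
      rw [hq, List.dropLast_eq_take, List.take_take, List.length_take]
      congr 1
      omega
    have hqpref : q <+: v := List.take_prefix _ _
    have hqw' : ¬ w' <+: q := fun h => hv (h.trans hqpref)
    set X : ℝ := (if q <+: w' then ((d:ℝ)^w'.length)⁻¹ else 0) with hX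
    have hXnn : 0 ≤ X := by
      rw [hX]; split_ifs
      · positivity
      · exact le_refl 0
    set e : ℕ → ℝ := fun n => ((d:ℝ)⁻¹)^n with he
    have hepow : ∀ n, e n = ((d:ℝ)^n)⁻¹ := by
      intro n; rw [he]; simp [inv_pow]
    have he0 : Filter.Tendsto e atTop (𝓝 0) :=
      tendsto_pow_atTop_nhds_zero_of_lt_one (by positivity)
        (inv_lt_one_of_one_lt₀ (by linarith))
    set K : ℕ := w'.length + t + 2 with hK
    have hmain : ∀ n, K ≤ n →
        F n q * (((d:ℝ)^t)⁻¹ - e n)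
          = F n (v.take t) * (((d:ℝ)^(t+1))⁻¹ - e n) + ((d:ℝ)-1) * X := by
      intro n hn
      have hstep := val_step (hFh n) hd (hFb n) q hqne (by rw [hqlen]; omega)
      rw [hqdrop, hqlen] at hstep
      have hNsum : (∑ s ∈ ternSphere d (n - (t+1)), (if w' <+: q ++ s then (1:ℝ) else 0))
          = if q <+: w' then (d:ℝ)^(n - w'.length) else 0 := by
        by_cases hχ : q <+: w'
        · rw [if_pos hχ, N_pref q w' hχ (n - (t+1)) (by rw [hqlen]; omega)]
          congr 1
          rw [hqlen]
          have := hχ.length_le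
          rw [hqlen] at this
          omega
        · rw [if_neg hχ, N_zero q w' ⟨hχ, hqw'⟩]
      rw [hNsum] at hstep
      have hne1 : ((d:ℝ)^n) ≠ 0 := by positivity
      have hkey1 : (d:ℝ)^(n - (t+1)) * ((d:ℝ)^n)⁻¹ = ((d:ℝ)^(t+1))⁻¹ := by
        have hsp : (d:ℝ)^(n - (t+1)) * (d:ℝ)^(t+1) = (d:ℝ)^n := pow_sub_mul_pow (d:ℝ) (by omega)
        have hne2 : ((d:ℝ)^(t+1)) ≠ 0 := by positivity
        field_simp
        linear_combination hsp
      have hkey2 : (d:ℝ)^(n - (t+1)) * d * ((d:ℝ)^n)⁻¹ = ((d:ℝ)^t)⁻¹ := by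
        have h1 : (d:ℝ)^(n - t) * (d:ℝ)^t = (d:ℝ)^n := pow_sub_mul_pow (d:ℝ) (by omega)
        have h2 : (d:ℝ)^(n - (t+1)) * d = (d:ℝ)^(n - t) := by
          rw [← pow_succ]
          congr 1
          omega
        have hne2 : ((d:ℝ)^t) ≠ 0 := by positivity
        field_simp
        linear_combination (d:ℝ)^t * h2 + h1
      have hA : ((d:ℝ)^(n - (t+1)) - 1) * e n = ((d:ℝ)^(t+1))⁻¹ - e n := by
        rw [hepow, sub_mul, one_mul, hkey1]
      have hB : ((d:ℝ)^(n - (t+1)) * d - 1) * e n = ((d:ℝ)^t)⁻¹ - e n := by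
        rw [hepow, sub_mul, one_mul, hkey2]
      have hC : (if q <+: w' then (d:ℝ)^(n - w'.length) else 0) * e n = X := by
        rw [hX, hepow]
        split_ifs with hχ
        · have hsp : (d:ℝ)^(n - w'.length) * (d:ℝ)^(w'.length) = (d:ℝ)^n :=
            pow_sub_mul_pow (d:ℝ) (by omega)
          have hne2 : ((d:ℝ)^w'.length) ≠ 0 := by positivity
          field_simp
          linear_combination hsp
        · simp
      calc F n q * (((d:ℝ)^t)⁻¹ - e n)
          = (F n (v.take t) * ((d:ℝ)^(n - (t+1)) - 1)
              + ((d:ℝ)-1) * (if q <+: w' then (d:ℝ)^(n - w'.length) else 0)) * e n := by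
            rw [← hB]
            linear_combination (-(e n)) * hstep
        _ = F n (v.take t) * (((d:ℝ)^(n - (t+1)) - 1) * e n)
              + ((d:ℝ)-1) * ((if q <+: w' then (d:ℝ)^(n - w'.length) else 0) * e n) := by
            ring
        _ = F n (v.take t) * (((d:ℝ)^(t+1))⁻¹ - e n) + ((d:ℝ)-1) * X := by
            rw [hA, hC]
    have hdenpos : ∀ n, K ≤ n → 0 < ((d:ℝ)^t)⁻¹ - e n := by
      intro n hn
      rw [hepow, sub_pos]
      have h1 : (d:ℝ)^t < (d:ℝ)^n := by
        apply pow_lt_pow_right₀ (by linarith) (by omega)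
      have h2 : (0:ℝ) < (d:ℝ)^t := by positivity
      exact inv_strictAnti₀ h2 h1
    refine ⟨(c * ((d:ℝ)^(t+1))⁻¹ + ((d:ℝ)-1) * X) / ((d:ℝ)^t)⁻¹, ?_, ?_⟩
    · apply div_pos
      · have h1 : 0 < c * ((d:ℝ)^(t+1))⁻¹ := by positivity
        have h2 : 0 ≤ ((d:ℝ)-1) * X := mul_nonneg (by linarith) hXnn
        linarith
      · positivity
    · have h1 : Filter.Tendsto (fun n => ((d:ℝ)^(t+1))⁻¹ - e n) atTop
          (𝓝 (((d:ℝ)^(t+1))⁻¹)) := by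
        simpa using tendsto_const_nhds.sub he0
      have hnum : Filter.Tendsto
          (fun n => F n (v.take t) * (((d:ℝ)^(t+1))⁻¹ - e n) + ((d:ℝ)-1) * X)
          atTop (𝓝 (c * ((d:ℝ)^(t+1))⁻¹ + ((d:ℝ)-1) * X)) :=
        (hTc.mul h1).add tendsto_const_nhds
      have hdent : Filter.Tendsto (fun n => ((d:ℝ)^t)⁻¹ - e n) atTop
          (𝓝 (((d:ℝ)^t)⁻¹)) := by
        simpa using tendsto_const_nhds.sub he0
      have hdiv := hnum.div hdent (by positivity)
      refine hdiv.congr' ?_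
      filter_upwards [eventually_ge_atTop K] with n hn
      have hd0 := hdenpos n hn
      simp only [Pi.div_apply]
      rw [div_eq_iff (ne_of_gt hd0)]
      exact (hmain n hn).symm

lemma frac_eq (hd : 2 ≤ d) {k n : ℕ} (h : k + 1 ≤ n) :
    ((d:ℝ)-1) * (d:ℝ)^(n-k) / ((d:ℝ)^(n-k) - 1)
      = ((d:ℝ)-1) * ((d:ℝ)^k)⁻¹ / (((d:ℝ)^k)⁻¹ - ((d:ℝ)⁻¹)^n) := by
  have hd2 : (2:ℝ) ≤ (d:ℝ) := by exact_mod_cast hd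
  have h1 : (1:ℝ) < (d:ℝ)^(n-k) := one_lt_pow₀ (by linarith) (by omega)
  have hne1 : (d:ℝ)^(n-k) - 1 ≠ 0 := sub_ne_zero.mpr (ne_of_gt h1)
  have hkey : (d:ℝ)^(n-k) * (d:ℝ)^k = (d:ℝ)^n := pow_sub_mul_pow (d:ℝ) (by omega)
  have hpos2 : 0 < ((d:ℝ)^k)⁻¹ - ((d:ℝ)⁻¹)^n := by
    rw [inv_pow, sub_pos]
    exact inv_strictAnti₀ (by positivity)
      (by apply pow_lt_pow_right₀ (by linarith) (by omega))
  have hnen : ((d:ℝ)^n) ≠ 0 := by positivity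
  have hnek : ((d:ℝ)^k) ≠ 0 := by positivity
  have hkey2 : (d:ℝ)^(n-k) * ((d:ℝ)^n)⁻¹ = ((d:ℝ)^k)⁻¹ := by
    field_simp
    linear_combination hkey
  rw [div_eq_div_iff hne1 (ne_of_gt hpos2), inv_pow]
  linear_combination (-((d:ℝ)-1)) * hkey2

end Stmt5

/-- Let `T` be the rooted `d`-ary tree (`d ≥ 2`) and let `C`, `D` be two
disjoint branches (the sets of descendants of incomparable nonroot vertices `w₁`, `w₂`).
For the Group-Walk random graph `R_n` on the sphere `∂T_n` — from each `v ∈ ∂T_n` run a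
simple random walk in the ball `T_n`, stopped at its first return to `∂T_n`, and join `v`
to the stopping vertex — the expected number of edges of `R_n` joining `C ∩ ∂T_n` to
`D ∩ ∂T_n` converges, as `n → ∞`, to a finite positive limit.

Since the first step of the walk from `v ∈ ∂T_n` necessarily goes to the parent
`v.dropLast`, this expectation equals
`Σ_{v ∈ C ∩ ∂T_n} f_n(parent v) + Σ_{v ∈ D ∩ ∂T_n} g_n(parent v)`, where `f n` (resp.
`g n`) is the harmonic function on the ball with boundary values the indicator of
`D ∩ ∂T_n` (resp. `C ∩ ∂T_n`), i.e. the probability of being stopped in the other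
branch. Interior vertices have degree `d + 1` in the ball except the root, of degree `d`. -/
theorem stmt_5 (d : ℕ) (hd : 2 ≤ d)
    (w₁ w₂ : List (Fin d)) (hw₁ : w₁ ≠ []) (hw₂ : w₂ ≠ [])
    (hdisj : ¬ w₁ <+: w₂ ∧ ¬ w₂ <+: w₁)
    (f g : ℕ → List (Fin d) → ℝ)
    (hfb : ∀ n, ∀ l ∈ ternSphere d n, f n l = if w₂ <+: l then 1 else 0)
    (hgb : ∀ n, ∀ l ∈ ternSphere d n, g n l = if w₁ <+: l then 1 else 0)
    (hfh : ∀ n, ∀ l : List (Fin d), l.length < n →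
      f n l * (if l = [] then (d : ℝ) else d + 1)
        = (if l = [] then 0 else f n l.dropLast) + ∑ i : Fin d, f n (l ++ [i]))
    (hgh : ∀ n, ∀ l : List (Fin d), l.length < n →
      g n l * (if l = [] then (d : ℝ) else d + 1)
        = (if l = [] then 0 else g n l.dropLast) + ∑ i : Fin d, g n (l ++ [i])) :
    ∃ L : ℝ, 0 < L ∧
      Filter.Tendsto
        (fun n => ∑ l ∈ ternSphere d n,
          ((if w₁ <+: l then f n l.dropLast else 0)
            + (if w₂ <+: l then g n l.dropLast else 0)))
        Filter.atTop (nhds L) := by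
  classical
  have hd2 : (2:ℝ) ≤ (d:ℝ) := by exact_mod_cast hd
  obtain ⟨c₁, hc₁, hT₁⟩ := Stmt5.chain hd w₂ w₁ hdisj.2 f hfb hfh w₁.length le_rfl
  obtain ⟨c₂, hc₂, hT₂⟩ := Stmt5.chain hd w₁ w₂ hdisj.1 g hgb hgh w₂.length le_rfl
  rw [List.take_length] at hT₁ hT₂
  set e : ℕ → ℝ := fun n => ((d:ℝ)⁻¹)^n with he
  have he0 : Filter.Tendsto e Filter.atTop (nhds 0) :=
    tendsto_pow_atTop_nhds_zero_of_lt_one (by positivity)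
      (inv_lt_one_of_one_lt₀ (by linarith))
  have hfac : ∀ k : ℕ, Filter.Tendsto
      (fun n => ((d:ℝ)-1) * ((d:ℝ)^k)⁻¹ / (((d:ℝ)^k)⁻¹ - e n))
      Filter.atTop (nhds ((d:ℝ)-1)) := by
    intro k
    have hne : ((d:ℝ)^k)⁻¹ ≠ 0 := by positivity
    have hden : Filter.Tendsto (fun n => ((d:ℝ)^k)⁻¹ - e n) Filter.atTop
        (nhds (((d:ℝ)^k)⁻¹)) := by
      simpa using tendsto_const_nhds.sub he0
    have hdiv := (tendsto_const_nhds
      (x := ((d:ℝ)-1) * ((d:ℝ)^k)⁻¹) (f := Filter.atTop (α := ℕ))).div hden hne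
    have heq : ((d:ℝ)-1) * ((d:ℝ)^k)⁻¹ / ((d:ℝ)^k)⁻¹ = (d:ℝ)-1 := by
      field_simp
    rw [heq] at hdiv
    exact hdiv.congr (fun n => by simp [Pi.div_apply])
  refine ⟨c₁ * ((d:ℝ)-1) + c₂ * ((d:ℝ)-1), ?_, ?_⟩
  · have h1 : 0 < c₁ * ((d:ℝ)-1) := mul_pos hc₁ (by linarith)
    have h2 : 0 < c₂ * ((d:ℝ)-1) := mul_pos hc₂ (by linarith)
    linarith
  · have htot := (hT₁.mul (hfac w₁.length)).add (hT₂.mul (hfac w₂.length))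
    refine htot.congr' ?_
    filter_upwards [Filter.eventually_ge_atTop (w₁.length + w₂.length + 2)] with n hn
    have hp1 := Stmt5.piece (hfh n) hd (hfb n) w₁ ⟨hdisj.1, hdisj.2⟩ (by omega)
    have hp2 := Stmt5.piece (hgh n) hd (hgb n) w₂ ⟨hdisj.2, hdisj.1⟩ (by omega)
    rw [Finset.sum_add_distrib, hp1, hp2,
      Stmt5.frac_eq hd (k := w₁.length) (n := n) (by omega),
      Stmt5.frac_eq hd (k := w₂.length) (n := n) (by omega)]
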